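/- Let f : [0,∞) → [0,∞) be twice differentiable with f(0) = 0 and f′ strictly increasing, let λ > 1, and let Γ ≥ 1 be a real number such that Γ ≥ (λ−1)·y·f″(λy) / (f′(λy) − f′(y)) for every y > 0. Then for every y ≥ 0: ∫₀^y f′(λt) dt − f(y) ≥ ((λ−1)/(λ²·Γ))·sup_{z ≥ 0} (f′(λy)·z − f(z)). Equivalently, f(λy)/λ − f(y) ≥ ((λ−1)/(λ²·Γ))·(λy·f′(λy) − f(λy)) for all y ≥ 0. -/

import Mathlib

/-- for a twice differentiable production cost `f : [0,∞) → [0,∞)` with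
`f(0) = 0` and strictly increasing `f'`, `λ > 1`, and `Γ ≥ 1` bounding
`(λ−1)·y·f″(λy)/(f′(λy) − f′(y))` for all `y > 0`, the pricing function
`p(y) = f'(λy)` is feasible with `α = λ²Γ/(λ−1)` and `β = 0`:
`∫₀^y f'(λt) dt − f(y) ≥ ((λ−1)/(λ²Γ))·sup_{z ≥ 0}(f'(λy)·z − f(z))` for all `y ≥ 0`;
equivalently, `f(λy)/λ − f(y) ≥ ((λ−1)/(λ²Γ))·(λy·f′(λy) − f(λy))`. -/
theorem stmt6 (f f' f'' : ℝ → ℝ) (lam Γ : ℝ)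
    (hf0 : f 0 = 0)
    (hfnn : ∀ y ≥ (0:ℝ), 0 ≤ f y)
    (hderiv : ∀ y ≥ (0:ℝ), HasDerivWithinAt f (f' y) (Set.Ici 0) y)
    (hderiv2 : ∀ y ≥ (0:ℝ), HasDerivWithinAt f' (f'' y) (Set.Ici 0) y)
    (h'mono : StrictMonoOn f' (Set.Ici 0))
    (hlam : 1 < lam)
    (hΓ1 : 1 ≤ Γ)
    (hΓ : ∀ y > (0:ℝ), (lam - 1) * y * f'' (lam * y) / (f' (lam * y) - f' y) ≤ Γ) :
    ∀ y ≥ (0:ℝ),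
      ((∫ t in (0:ℝ)..y, f' (lam * t)) - f y ≥
        ((lam - 1)/(lam^2 * Γ)) * sSup ((fun z => f' (lam * y) * z - f z) '' Set.Ici 0)) ∧
      (f (lam * y)/lam - f y ≥
        ((lam - 1)/(lam^2 * Γ)) * (lam * y * f' (lam * y) - f (lam * y))) := by
  have hlam0 : (0:ℝ) < lam := lt_trans one_pos hlam
  have hΓ0 : (0:ℝ) < Γ := lt_of_lt_of_le one_pos hΓ1
  set c : ℝ := (lam - 1)/(lam^2 * Γ) with hc
  -- continuity of f and f' on Ici 0
  have hcf : ContinuousOn f (Set.Ici 0) := fun x hx => (hderiv x hx).continuousWithinAt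
  have hcf' : ContinuousOn f' (Set.Ici 0) := fun x hx => (hderiv2 x hx).continuousWithinAt
  -- maps to
  have hmaps : Set.MapsTo (fun t : ℝ => lam * t) (Set.Ici 0) (Set.Ici 0) := by
    intro t ht; exact mul_nonneg hlam0.le ht
  -- derivative of t ↦ f (lam * t)
  have hin : ∀ t : ℝ, HasDerivWithinAt (fun t : ℝ => lam * t) lam (Set.Ici 0) t := by
    intro t
    simpa using ((hasDerivAt_id t).const_mul lam).hasDerivWithinAt
  have hdF : ∀ t ≥ (0:ℝ), HasDerivWithinAt (fun t => f (lam * t)) (f' (lam * t) * lam)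
      (Set.Ici 0) t := by
    intro t ht
    exact HasDerivWithinAt.comp t (hderiv (lam * t) (mul_nonneg hlam0.le ht)) (hin t) hmaps
  -- derivative of t ↦ f' (lam * t)
  have hdF' : ∀ t ≥ (0:ℝ), HasDerivWithinAt (fun t => f' (lam * t)) (f'' (lam * t) * lam)
      (Set.Ici 0) t := by
    intro t ht
    exact HasDerivWithinAt.comp t (hderiv2 (lam * t) (mul_nonneg hlam0.le ht)) (hin t) hmaps
  -- tangent line inequality
  have tangent : ∀ a ∈ Set.Ici (0:ℝ), ∀ b ∈ Set.Ici (0:ℝ), f' a * (b - a) ≤ f b - f a := by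
    intro a ha b hb
    have hg : ∀ x ∈ Set.Ici (0:ℝ), HasDerivWithinAt (fun z => f z - f' a * z) (f' x - f' a)
        (Set.Ici 0) x := by
      intro x hx
      have hlin : HasDerivWithinAt (fun z : ℝ => f' a * z) (f' a) (Set.Ici (0:ℝ)) x := by
        simpa using ((hasDerivAt_id x).const_mul (f' a)).hasDerivWithinAt
      exact (hderiv x hx).sub hlin
    have hgc : ContinuousOn (fun z => f z - f' a * z) (Set.Ici 0) :=
      hcf.sub (continuous_const.mul continuous_id).continuousOn
    have hexp : f' a * (b - a) = f' a * b - f' a * a := by ring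
    rcases le_or_gt a b with hab | hab
    · have hmono : MonotoneOn (fun z => f z - f' a * z) (Set.Ici a) := by
        apply monotoneOn_of_hasDerivWithinAt_nonneg (convex_Ici a)
          (hgc.mono (Set.Ici_subset_Ici.mpr ha)) (f' := fun x => f' x - f' a)
        · intro x hx
          rw [interior_Ici] at hx
          exact (hg x (Set.mem_Ici.mpr (le_trans ha (Set.mem_Ioi.mp hx).le))).mono
            (by rw [interior_Ici]; exact fun z hz => Set.mem_Ici.mpr (le_trans ha (Set.mem_Ioi.mp hz).le))
        · intro x hx
          rw [interior_Ici] at hx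
          exact sub_nonneg.mpr (h'mono ha (Set.mem_Ici.mpr (le_trans ha (Set.mem_Ioi.mp hx).le)) hx).le
      have h := hmono Set.self_mem_Ici (Set.mem_Ici.mpr hab) hab
      dsimp only at h
      linarith
    · have hanti : AntitoneOn (fun z => f z - f' a * z) (Set.Icc b a) := by
        apply antitoneOn_of_hasDerivWithinAt_nonpos (convex_Icc b a)
          (hgc.mono (fun x hx => le_trans hb hx.1)) (f' := fun x => f' x - f' a)
        · intro x hx
          rw [interior_Icc] at hx
          exact (hg x (le_trans hb hx.1.le)).mono
            (by rw [interior_Icc]; exact fun z hz => le_trans hb hz.1.le)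
        · intro x hx
          rw [interior_Icc] at hx
          exact sub_nonpos.mpr (h'mono (le_trans hb hx.1.le) ha hx.2).le
      have h := hanti (Set.mem_Icc.mpr ⟨le_refl b, hab.le⟩)
        (Set.mem_Icc.mpr ⟨hab.le, le_refl a⟩) hab.le
      dsimp only at h
      linarith
  intro y hy
  have hlamy : (0:ℝ) ≤ lam * y := mul_nonneg hlam0.le hy
  -- compute sSup
  have hsup : sSup ((fun z => f' (lam * y) * z - f z) '' Set.Ici 0)
      = f' (lam * y) * (lam * y) - f (lam * y) := by
    apply IsGreatest.csSup_eq
    constructor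
    · exact ⟨lam * y, hlamy, rfl⟩
    · rintro w ⟨z, hz, rfl⟩
      have h := tangent (lam * y) hlamy z hz
      rw [mul_sub] at h
      dsimp only
      linarith
  -- core inequality
  have core : f (lam * y)/lam - f y ≥ c * (lam * y * f' (lam * y) - f (lam * y)) := by
    set G : ℝ → ℝ := fun y => f (lam * y)/lam - f y - c * (lam * y * f' (lam * y) - f (lam * y))
      with hG
    have hG0 : G 0 = 0 := by simp [hG, hf0]
    have hdG : ∀ x ≥ (0:ℝ), HasDerivWithinAt G
        (f' (lam * x) - f' x - c * (lam^2 * x * f'' (lam * x))) (Set.Ici 0) x := by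
      intro x hx
      have h1 : HasDerivWithinAt (fun t => f (lam * t)/lam) (f' (lam * x)) (Set.Ici 0) x := by
        have := (hdF x hx).div_const lam
        exact this.congr_deriv (by rw [mul_div_assoc, div_self hlam0.ne', mul_one])
      have h2 : HasDerivWithinAt (fun t => lam * t * f' (lam * t))
          (lam * f' (lam * x) + lam * x * (f'' (lam * x) * lam)) (Set.Ici 0) x := by
        have := (((hasDerivAt_id x).const_mul lam).hasDerivWithinAt).mul (hdF' x hx)
        exact this.congr_deriv (by simp only [id_eq, mul_one])
      have h3 : HasDerivWithinAt (fun t => lam * t * f' (lam * t) - f (lam * t))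
          (lam * f' (lam * x) + lam * x * (f'' (lam * x) * lam) - f' (lam * x) * lam)
          (Set.Ici 0) x := h2.sub (hdF x hx)
      have h4 := (h1.sub (hderiv x hx)).sub (h3.const_mul c)
      exact h4.congr_deriv (by ring)
    have hmono : MonotoneOn G (Set.Ici 0) := by
      apply monotoneOn_of_hasDerivWithinAt_nonneg (convex_Ici 0)
        (f' := fun x => f' (lam * x) - f' x - c * (lam^2 * x * f'' (lam * x)))
      · intro x hx
        exact (hdG x hx).continuousWithinAt
      · intro x hx
        rw [interior_Ici] at hx
        exact (hdG x hx.le).mono (by rw [interior_Ici]; exact fun z hz => Set.mem_Ici.mpr (le_of_lt hz))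
      · intro x hx
        rw [interior_Ici] at hx
        have hx0 : (0:ℝ) < x := hx
        have hden : 0 < f' (lam * x) - f' x := by
          have hlt : x < lam * x := by nlinarith [mul_pos (sub_pos.mpr hlam) hx0]
          exact sub_pos.mpr (h'mono hx0.le (mul_nonneg hlam0.le hx0.le) hlt)
        have hb := hΓ x hx
        rw [div_le_iff₀ hden] at hb
        have : c * (lam^2 * x * f'' (lam * x)) ≤ f' (lam * x) - f' x := by
          rw [hc]
          rw [div_mul_eq_mul_div, div_le_iff₀ (by positivity)]
          nlinarith
        linarith
    have := hmono Set.self_mem_Ici (Set.mem_Ici.mpr hy) hy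
    rw [hG0] at this
    simpa [hG] using this
  constructor
  · -- FTC
    have hint : (∫ t in (0:ℝ)..y, f' (lam * t)) = f (lam * y)/lam := by
      have heq : ∫ t in (0:ℝ)..y, f' (lam * t)
          = (fun t => f (lam * t)/lam) y - (fun t => f (lam * t)/lam) 0 := by
        apply intervalIntegral.integral_eq_sub_of_hasDeriv_right_of_le hy
        · exact ((hcf.comp (continuous_const.mul continuous_id).continuousOn hmaps).div_const
            lam).mono (fun x hx => hx.1)
        · intro x hx
          have h1 : HasDerivWithinAt (fun t => f (lam * t)/lam) (f' (lam * x)) (Set.Ici 0) x := by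
            have := (hdF x hx.1.le).div_const lam
            exact this.congr_deriv (by rw [mul_div_assoc, div_self hlam0.ne', mul_one])
          exact h1.mono (fun z hz => le_of_lt (lt_of_lt_of_le hx.1 hz.le) : Set.Ioi x ⊆ Set.Ici 0)
        · apply ContinuousOn.intervalIntegrable
          rw [Set.uIcc_of_le hy]
          exact (hcf'.comp (continuous_const.mul continuous_id).continuousOn hmaps).mono
            (fun x hx => hx.1)
      rw [heq]
      simp [hf0]
    rw [hint, hsup]
    calc ((lam - 1)/(lam^2 * Γ)) * (f' (lam * y) * (lam * y) - f (lam * y))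
        = c * (lam * y * f' (lam * y) - f (lam * y)) := by rw [hc]; ring
      _ ≤ f (lam * y)/lam - f y := core
  · exact core
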